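/- arXiv:2512.21036 — 2 statements merged into one kernel-verified Lean document; each statement's English description precedes it below -/
import Mathlib

section
/- With the same setup (V(η)=(μ²+|η|²)^((p-2)/2)η on ℂ^m, real ellipticity constants c₁ ≤ c₂), for all η₁, η₂ ∈ ℂ^m: |Im⟨V(η₁)-V(η₂), η₁-η₂⟩_ℂ| ≤ √(c₂² − c₁²) · (μ²+|η₁|²+|η₂|²)^((p-2)/2) |η₁-η₂|². -/
open scoped ENNReal

lemma pLap_aux_st (s t c₁ c₂ : ℝ) (hc₁ : 0 < c₁) (hc₂ : c₁ ≤ c₂)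
    (hs : 0 ≤ s) (ht : 0 ≤ t) :
    (c₂ - c₁) ^ 2 * (s * t) ≤ (c₂ ^ 2 - c₁ ^ 2) * (s + t) ^ 2 := by
  nlinarith [mul_nonneg (mul_nonneg (by linarith : (0:ℝ) ≤ c₂ - c₁) (by linarith : (0:ℝ) ≤ c₂ + c₁)) (sq_nonneg (s - t)),
    mul_nonneg (mul_nonneg (by linarith : (0:ℝ) ≤ c₂ - c₁) (by linarith : (0:ℝ) ≤ 3*c₂ + 5*c₁)) (mul_nonneg hs ht)]

set_option maxHeartbeats 1000000 in
lemma pLap_scalar_key (n₁ n₂ r₁ r₂ M c₁ c₂ a b : ℝ)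
    (hn₁ : 0 ≤ n₁) (hn₂ : 0 ≤ n₂) (hM : 0 ≤ M) (hc₁ : 0 < c₁) (hc₂ : c₁ ≤ c₂)
    (hab : a ^ 2 + b ^ 2 ≤ (n₁ * n₂) ^ 2)
    (hrr : n₁ = n₂ → r₁ = r₂)
    (h1l : c₁ * M * (n₁ - n₂) ^ 2 ≤ (r₁ * n₁ - r₂ * n₂) * (n₁ - n₂))
    (h1r : (r₁ * n₁ - r₂ * n₂) * (n₁ - n₂) ≤ c₂ * M * (n₁ - n₂) ^ 2)
    (h2l : c₁ * M * (n₁ + n₂) ^ 2 ≤ (r₁ * n₁ + r₂ * n₂) * (n₁ + n₂))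
    (h2r : (r₁ * n₁ + r₂ * n₂) * (n₁ + n₂) ≤ c₂ * M * (n₁ + n₂) ^ 2) :
    ((r₁ - r₂) * b) ^ 2 ≤ (c₂ ^ 2 - c₁ ^ 2) * M ^ 2 * (n₁ ^ 2 + n₂ ^ 2 - 2 * a) ^ 2 := by
  have hcc : 0 ≤ c₂ ^ 2 - c₁ ^ 2 := by nlinarith
  by_cases hb : b = 0
  · subst hb
    have : ((r₁ - r₂) * 0 : ℝ) ^ 2 = 0 := by ring
    rw [this]; positivity
  by_cases hne : n₁ = n₂
  · rw [hrr hne]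
    have : ((r₂ - r₂) * b : ℝ) ^ 2 = 0 := by ring
    rw [this]; positivity
  -- main case
  have hN : 0 < n₁ * n₂ := by
    rcases lt_or_eq_of_le (mul_nonneg hn₁ hn₂) with h | h
    · exact h
    · exfalso; apply hb
      have hb2 : b ^ 2 ≤ 0 := by nlinarith [sq_nonneg a]
      nlinarith [sq_nonneg b]
  set σ : ℝ := n₁ + n₂ with hσdef
  set δ : ℝ := n₁ - n₂ with hδdef
  set u : ℝ := r₁ * n₁ - r₂ * n₂ with hudef
  set v : ℝ := r₁ * n₁ + r₂ * n₂ with hvdef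
  have hδ : δ ≠ 0 := sub_ne_zero.mpr hne
  have hσ : 0 < σ := by
    have : 0 < n₁ ∧ 0 < n₂ := by
      constructor <;> nlinarith
    nlinarith [this.1, this.2]
  have q1 : 0 ≤ σ ^ 2 * (u * δ - c₁ * M * δ ^ 2) := by
    apply mul_nonneg (sq_nonneg σ); linarith
  have q2 : 0 ≤ σ ^ 2 * (c₂ * M * δ ^ 2 - u * δ) := by
    apply mul_nonneg (sq_nonneg σ); linarith
  have q3 : 0 ≤ δ ^ 2 * (v * σ - c₁ * M * σ ^ 2) := by
    apply mul_nonneg (sq_nonneg δ); linarith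
  have q4 : 0 ≤ δ ^ 2 * (c₂ * M * σ ^ 2 - v * σ) := by
    apply mul_nonneg (sq_nonneg δ); linarith
  have hXY1 : σ ^ 2 * (u * δ) - δ ^ 2 * (v * σ) ≤ (c₂ - c₁) * M * (σ ^ 2 * δ ^ 2) := by
    nlinarith [q2, q3]
  have hXY2 : -((c₂ - c₁) * M * (σ ^ 2 * δ ^ 2)) ≤ σ ^ 2 * (u * δ) - δ ^ 2 * (v * σ) := by
    nlinarith [q1, q4]
  have h3 : (σ ^ 2 * (u * δ) - δ ^ 2 * (v * σ)) ^ 2 ≤ ((c₂ - c₁) * M * (σ ^ 2 * δ ^ 2)) ^ 2 :=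
    sq_le_sq' hXY2 hXY1
  have hb2 : b ^ 2 ≤ (n₁ * n₂) ^ 2 - a ^ 2 := by linarith
  have G1 : (σ ^ 2 * (u * δ) - δ ^ 2 * (v * σ)) ^ 2 * b ^ 2 ≤
      ((c₂ - c₁) * M * (σ ^ 2 * δ ^ 2)) ^ 2 * ((n₁ * n₂) ^ 2 - a ^ 2) :=
    mul_le_mul h3 hb2 (sq_nonneg b) (sq_nonneg _)
  have haN1 : 0 ≤ n₁ * n₂ - a := by nlinarith [sq_nonneg b]
  have haN2 : 0 ≤ n₁ * n₂ + a := by nlinarith [sq_nonneg b]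
  have hs : 0 ≤ σ ^ 2 * (n₁ * n₂ - a) := mul_nonneg (sq_nonneg σ) haN1
  have ht : 0 ≤ δ ^ 2 * (n₁ * n₂ + a) := mul_nonneg (sq_nonneg δ) haN2
  have G3 := pLap_aux_st (σ ^ 2 * (n₁ * n₂ - a)) (δ ^ 2 * (n₁ * n₂ + a)) c₁ c₂ hc₁ hc₂ hs ht
  have hM2 : (0:ℝ) ≤ M ^ 2 * (σ ^ 2 * δ ^ 2) := by positivity
  have G3' := mul_le_mul_of_nonneg_left G3 hM2
  have hfac : (0:ℝ) < 4 * (n₁ * n₂) ^ 2 * (σ ^ 2 * δ ^ 2) := by positivity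
  have key : ((r₁ - r₂) * b) ^ 2 * (4 * (n₁ * n₂) ^ 2 * (σ ^ 2 * δ ^ 2)) ≤
      ((c₂ ^ 2 - c₁ ^ 2) * M ^ 2 * (n₁ ^ 2 + n₂ ^ 2 - 2 * a) ^ 2) *
        (4 * (n₁ * n₂) ^ 2 * (σ ^ 2 * δ ^ 2)) := by
    have e1 : ((r₁ - r₂) * b) ^ 2 * (4 * (n₁ * n₂) ^ 2 * (σ ^ 2 * δ ^ 2)) =
        (σ ^ 2 * (u * δ) - δ ^ 2 * (v * σ)) ^ 2 * b ^ 2 := by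
      rw [hudef, hvdef, hσdef, hδdef]; ring
    have e2 : ((c₂ - c₁) * M * (σ ^ 2 * δ ^ 2)) ^ 2 * ((n₁ * n₂) ^ 2 - a ^ 2) =
        M ^ 2 * (σ ^ 2 * δ ^ 2) * ((c₂ - c₁) ^ 2 *
          ((σ ^ 2 * (n₁ * n₂ - a)) * (δ ^ 2 * (n₁ * n₂ + a)))) := by ring
    have e3 : M ^ 2 * (σ ^ 2 * δ ^ 2) * ((c₂ ^ 2 - c₁ ^ 2) *
        ((σ ^ 2 * (n₁ * n₂ - a)) + (δ ^ 2 * (n₁ * n₂ + a))) ^ 2) =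
        ((c₂ ^ 2 - c₁ ^ 2) * M ^ 2 * (n₁ ^ 2 + n₂ ^ 2 - 2 * a) ^ 2) *
          (4 * (n₁ * n₂) ^ 2 * (σ ^ 2 * δ ^ 2)) := by
      rw [hσdef, hδdef]; ring
    calc ((r₁ - r₂) * b) ^ 2 * (4 * (n₁ * n₂) ^ 2 * (σ ^ 2 * δ ^ 2)) =
        (σ ^ 2 * (u * δ) - δ ^ 2 * (v * σ)) ^ 2 * b ^ 2 := e1
      _ ≤ ((c₂ - c₁) * M * (σ ^ 2 * δ ^ 2)) ^ 2 * ((n₁ * n₂) ^ 2 - a ^ 2) := G1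
      _ = M ^ 2 * (σ ^ 2 * δ ^ 2) * ((c₂ - c₁) ^ 2 *
          ((σ ^ 2 * (n₁ * n₂ - a)) * (δ ^ 2 * (n₁ * n₂ + a)))) := e2
      _ ≤ M ^ 2 * (σ ^ 2 * δ ^ 2) * ((c₂ ^ 2 - c₁ ^ 2) *
          ((σ ^ 2 * (n₁ * n₂ - a)) + (δ ^ 2 * (n₁ * n₂ + a))) ^ 2) := G3'
      _ = _ := e3
  exact le_of_mul_le_mul_right key hfac

lemma pLap_im_eq (m : ℕ) (r₁ r₂ : ℝ) (η₁ η₂ : EuclideanSpace ℂ (Fin m)) :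
    (@inner ℂ _ _ (r₁ • η₁ - r₂ • η₂) (η₁ - η₂)).im =
      (r₂ - r₁) * (@inner ℂ _ _ η₁ η₂).im := by
  have h1 : (r₁ : ℂ) • η₁ = r₁ • η₁ := Complex.coe_smul r₁ η₁
  have h2 : (r₂ : ℂ) • η₂ = r₂ • η₂ := Complex.coe_smul r₂ η₂
  have him1 : (@inner ℂ _ _ η₁ η₁).im = 0 := by rw [inner_self_eq_norm_sq_to_K]; norm_cast
  have him2 : (@inner ℂ _ _ η₂ η₂).im = 0 := by rw [inner_self_eq_norm_sq_to_K]; norm_cast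
  rw [← h1, ← h2, inner_sub_left, inner_sub_right, inner_sub_right,
    inner_smul_left, inner_smul_left, inner_smul_left, inner_smul_left,
    Complex.conj_ofReal, Complex.conj_ofReal,
    (inner_conj_symm η₂ η₁).symm]
  set D := @inner ℂ _ _ η₁ η₂ with hD
  simp only [Complex.sub_im, Complex.mul_im, Complex.ofReal_re, Complex.ofReal_im,
    Complex.conj_re, Complex.conj_im, him1, him2]
  ring

/-- Sectorial bound on the imaginary part of the complex pairing of the regularized
p-Laplacian vector field: assuming the real ellipticity bounds with constants `c₁ ≤ c₂`
for `V` on ℝ^(2m) (identified with ℂ^m), for all `η₁ η₂ ∈ ℂ^m`,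
`|Im ⟨V(η₁) - V(η₂), η₁ - η₂⟩| ≤ √(c₂² − c₁²) (μ² + |η₁|² + |η₂|²)^((p-2)/2) |η₁ - η₂|²`. -/
theorem pLaplace_complex_im_upper_bound (m : ℕ) (p μ c₁ c₂ : ℝ)
    (hp : 1 < p) (hμ0 : 0 ≤ μ) (hμ1 : μ ≤ 1) (hc₁ : 0 < c₁) (hc₂ : c₁ ≤ c₂)
    (hell : ∀ y z : EuclideanSpace ℝ (Fin m ⊕ Fin m),
      c₁ * (μ ^ 2 + ‖y‖ ^ 2 + ‖z‖ ^ 2) ^ ((p - 2) / 2) * ‖y - z‖ ^ 2 ≤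
        @inner ℝ _ _
          (((μ ^ 2 + ‖y‖ ^ 2) ^ ((p - 2) / 2)) • y - ((μ ^ 2 + ‖z‖ ^ 2) ^ ((p - 2) / 2)) • z)
          (y - z) ∧
      @inner ℝ _ _
          (((μ ^ 2 + ‖y‖ ^ 2) ^ ((p - 2) / 2)) • y - ((μ ^ 2 + ‖z‖ ^ 2) ^ ((p - 2) / 2)) • z)
          (y - z) ≤
        c₂ * (μ ^ 2 + ‖y‖ ^ 2 + ‖z‖ ^ 2) ^ ((p - 2) / 2) * ‖y - z‖ ^ 2) :
    ∀ η₁ η₂ : EuclideanSpace ℂ (Fin m),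
      |(@inner ℂ _ _
          ((((μ ^ 2 + ‖η₁‖ ^ 2) ^ ((p - 2) / 2) : ℝ)) • η₁ -
            (((μ ^ 2 + ‖η₂‖ ^ 2) ^ ((p - 2) / 2) : ℝ)) • η₂)
          (η₁ - η₂)).im| ≤
        Real.sqrt (c₂ ^ 2 - c₁ ^ 2) *
          (μ ^ 2 + ‖η₁‖ ^ 2 + ‖η₂‖ ^ 2) ^ ((p - 2) / 2) * ‖η₁ - η₂‖ ^ 2 := by
  intro η₁ η₂
  have hcc : 0 ≤ c₂ ^ 2 - c₁ ^ 2 := by nlinarith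
  rcases Nat.eq_zero_or_pos m with hm0 | hm
  · subst hm0
    have hηeq : η₁ = η₂ := by ext x; exact x.elim0
    subst hηeq
    have h0 : η₁ - η₁ = 0 := sub_self η₁
    rw [h0, inner_zero_right]
    simp only [Complex.zero_im, abs_zero, norm_zero]
    have : (0:ℝ) ≤ Real.sqrt (c₂ ^ 2 - c₁ ^ 2) *
        (μ ^ 2 + ‖η₁‖ ^ 2 + ‖η₁‖ ^ 2) ^ ((p - 2) / 2) * (0:ℝ) ^ 2 := by
      rw [zero_pow (by norm_num), mul_zero]
    simpa using this
  -- main case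
  set e : EuclideanSpace ℝ (Fin m ⊕ Fin m) :=
    EuclideanSpace.single (Sum.inl ⟨0, hm⟩ : Fin m ⊕ Fin m) (1:ℝ) with he
  have hnorme : ‖e‖ = 1 := by rw [he, EuclideanSpace.norm_single]; norm_num
  have hsm : ∀ s : ℝ, ‖s • e‖ ^ 2 = s ^ 2 := by
    intro s; rw [norm_smul, hnorme, mul_one, Real.norm_eq_abs, sq_abs]
  have hinnersm : ∀ A B s t : ℝ, @inner ℝ _ _ (A • (s • e) - B • (t • e)) (s • e - t • e)
      = (A * s - B * t) * (s - t) := by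
    intro A B s t
    rw [smul_smul, smul_smul, ← sub_smul, ← sub_smul, real_inner_smul_left,
      real_inner_smul_right, real_inner_self_eq_norm_sq, hnorme]
    ring
  have helper : ∀ s t : ℝ,
      c₁ * (μ ^ 2 + s ^ 2 + t ^ 2) ^ ((p - 2) / 2) * (s - t) ^ 2 ≤
        ((μ ^ 2 + s ^ 2) ^ ((p - 2) / 2) * s - (μ ^ 2 + t ^ 2) ^ ((p - 2) / 2) * t) * (s - t) ∧
      ((μ ^ 2 + s ^ 2) ^ ((p - 2) / 2) * s - (μ ^ 2 + t ^ 2) ^ ((p - 2) / 2) * t) * (s - t) ≤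
        c₂ * (μ ^ 2 + s ^ 2 + t ^ 2) ^ ((p - 2) / 2) * (s - t) ^ 2 := by
    intro s t
    have h := hell (s • e) (t • e)
    rw [hsm s, hsm t] at h
    have hd : ‖s • e - t • e‖ ^ 2 = (s - t) ^ 2 := by
      rw [← sub_smul]; exact hsm (s - t)
    rw [hd, hinnersm] at h
    exact h
  set n₁ : ℝ := ‖η₁‖ with hn₁def
  set n₂ : ℝ := ‖η₂‖ with hn₂def
  set r₁ : ℝ := (μ ^ 2 + n₁ ^ 2) ^ ((p - 2) / 2) with hr₁def
  set r₂ : ℝ := (μ ^ 2 + n₂ ^ 2) ^ ((p - 2) / 2) with hr₂def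
  set M : ℝ := (μ ^ 2 + n₁ ^ 2 + n₂ ^ 2) ^ ((p - 2) / 2) with hMdef
  set D : ℂ := @inner ℂ _ _ η₁ η₂ with hDdef
  set a : ℝ := D.re with hadef
  set b : ℝ := D.im with hbdef
  have hM0 : 0 ≤ M := Real.rpow_nonneg (by positivity) _
  have hab : a ^ 2 + b ^ 2 ≤ (n₁ * n₂) ^ 2 := by
    have h1 : a ^ 2 + b ^ 2 = ‖D‖ ^ 2 := by
      rw [Complex.sq_norm, Complex.normSq_apply]; ring
    have h2 : ‖D‖ ≤ n₁ * n₂ := norm_inner_le_norm η₁ η₂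
    rw [h1]
    have := mul_self_le_mul_self (norm_nonneg D) h2
    nlinarith
  have H1 := helper n₁ n₂
  have H2 := helper n₁ (-n₂)
  simp only [neg_sq, sub_neg_eq_add, mul_neg] at H2
  have hnormsub : ‖η₁ - η₂‖ ^ 2 = n₁ ^ 2 + n₂ ^ 2 - 2 * a := by
    rw [@norm_sub_sq ℂ _ _ _ _ η₁ η₂]
    simp only [hadef, hDdef, RCLike.re_to_complex]
    ring
  have him : (@inner ℂ _ _ ((r₁ : ℝ) • η₁ - (r₂ : ℝ) • η₂) (η₁ - η₂)).im = (r₂ - r₁) * b :=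
    pLap_im_eq m r₁ r₂ η₁ η₂
  rw [him, hnormsub]
  have hkey := pLap_scalar_key n₁ n₂ r₁ r₂ M c₁ c₂ a b (norm_nonneg _) (norm_nonneg _)
    hM0 hc₁ hc₂ hab (fun h => by rw [hr₁def, hr₂def, h]) H1.1 H1.2
    (by linarith [H2.1] : c₁ * M * (n₁ + n₂) ^ 2 ≤ (r₁ * n₁ + r₂ * n₂) * (n₁ + n₂))
    (by linarith [H2.2])
  have habs : |(r₂ - r₁) * b| = |(r₁ - r₂) * b| := by
    rw [show (r₂ - r₁) * b = -((r₁ - r₂) * b) by ring, abs_neg]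
  rw [habs]
  have hX : 0 ≤ n₁ ^ 2 + n₂ ^ 2 - 2 * a := by
    rw [← hnormsub]; positivity
  calc |(r₁ - r₂) * b| = Real.sqrt (((r₁ - r₂) * b) ^ 2) := (Real.sqrt_sq_eq_abs _).symm
    _ ≤ Real.sqrt ((c₂ ^ 2 - c₁ ^ 2) * M ^ 2 * (n₁ ^ 2 + n₂ ^ 2 - 2 * a) ^ 2) :=
        Real.sqrt_le_sqrt hkey
    _ = Real.sqrt (c₂ ^ 2 - c₁ ^ 2) * M * (n₁ ^ 2 + n₂ ^ 2 - 2 * a) := by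
        rw [show (c₂ ^ 2 - c₁ ^ 2) * M ^ 2 * (n₁ ^ 2 + n₂ ^ 2 - 2 * a) ^ 2 =
          (c₂ ^ 2 - c₁ ^ 2) * (M * (n₁ ^ 2 + n₂ ^ 2 - 2 * a)) ^ 2 by ring,
          Real.sqrt_mul hcc, Real.sqrt_sq (by positivity), mul_assoc]
end

section
/- Let Ω ⊂ ℝⁿ be (δ₀, r₀)-Reifenberg flat with 0 < δ₀ < 1/8, and let 𝒱₁, 𝒱₂ ⊆ Ω be measurable with |𝒱₁| ≤ ε|B_{R₀}| for some R₀ ∈ (0, r₀] and ε ∈ (0,1). Assume that for all x₀ ∈ Ω and ρ ∈ (0, R₀]: if B_ρ(x₀) ∩ Ω ⊄ 𝒱₂ then |B_ρ(x₀) ∩ 𝒱₁| < ε|B_ρ(x₀)|. Then |𝒱₁| ≤ 15ⁿ ε |𝒱₂|. -/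
open MeasureTheory
open scoped ENNReal

/-- `Ω` is `(δ₀, r₀)`-Reifenberg flat: at every boundary point `x₀` and scale
`0 < r < (1 − δ₀) r₀` there is a direction `ν` such that, with `δ = δ₀/(1−δ₀)`,
`B_r(x₀) ∩ {⟨ν, x − x₀⟩ > δ r} ⊆ Ω` and `B_r(x₀) ∩ Ω ⊆ {⟨ν, x − x₀⟩ > −δ r}`. -/
def IsReifenbergFlat {n : ℕ} (Ω : Set (EuclideanSpace ℝ (Fin n))) (δ₀ r₀ : ℝ) : Prop :=
  ∀ x₀ ∈ frontier Ω, ∀ r : ℝ, 0 < r → r < (1 - δ₀) * r₀ →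
    ∃ ν : EuclideanSpace ℝ (Fin n), ‖ν‖ = 1 ∧
      (Metric.ball x₀ r ∩ {x | δ₀ / (1 - δ₀) * r < @inner ℝ _ _ ν (x - x₀)} ⊆ Ω) ∧
      (Metric.ball x₀ r ∩ Ω ⊆ {x | -(δ₀ / (1 - δ₀) * r) < @inner ℝ _ _ ν (x - x₀)})

open Metric

lemma exists_frontier_near {E : Type*} [NormedAddCommGroup E] [NormedSpace ℝ E]
    {Ω : Set E} {x z : E} (hx : x ∈ Ω) (hz : z ∉ Ω) :
    ∃ x₀ ∈ frontier Ω, dist x x₀ ≤ dist x z := by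
  have hseg : IsPreconnected (segment ℝ x z) := (convex_segment x z).isPreconnected
  have hne : (segment ℝ x z ∩ frontier Ω).Nonempty := by
    by_contra h
    rw [Set.not_nonempty_iff_eq_empty] at h
    have hsub : segment ℝ x z ⊆ interior Ω ∪ (closure Ω)ᶜ := by
      intro p hp
      have hpf : p ∉ frontier Ω := fun hf => Set.eq_empty_iff_forall_notMem.1 h p ⟨hp, hf⟩
      by_cases hpc : p ∈ closure Ω
      · left
        by_contra hpi
        exact hpf ⟨hpc, hpi⟩
      · exact Or.inr hpc
    have h1 : (segment ℝ x z ∩ interior Ω).Nonempty ∨ x ∈ frontier Ω := by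
      by_cases hxi : x ∈ interior Ω
      · exact Or.inl ⟨x, left_mem_segment ℝ x z, hxi⟩
      · exact Or.inr ⟨subset_closure hx, hxi⟩
    rcases h1 with h1 | h1
    · have h2 : (segment ℝ x z ∩ (closure Ω)ᶜ).Nonempty := by
        refine ⟨z, right_mem_segment ℝ x z, ?_⟩
        intro hzc
        rcases hsub (right_mem_segment ℝ x z) with hzi | hzi
        · exact hz (interior_subset hzi)
        · exact hzi hzc
      obtain ⟨p, _, hpi, hpc⟩ := hseg (interior Ω) (closure Ω)ᶜ isOpen_interior
        isClosed_closure.isOpen_compl hsub h1 h2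
      exact hpc (subset_closure (interior_subset hpi))
    · exact Set.eq_empty_iff_forall_notMem.1 h x ⟨left_mem_segment ℝ x z, h1⟩
  obtain ⟨x₀, hx₀s, hx₀f⟩ := hne
  refine ⟨x₀, hx₀f, ?_⟩
  obtain ⟨a, b, ha, hb, hab, rfl⟩ := hx₀s
  have : x - (a • x + b • z) = b • (x - z) := by
    have haa : a = 1 - b := by linarith
    subst haa; module
  rw [dist_eq_norm, dist_eq_norm, this, norm_smul, Real.norm_eq_abs, abs_of_nonneg hb]
  have hb1 : b ≤ 1 := by linarith
  nlinarith [norm_nonneg (x - z)]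

set_option maxHeartbeats 1000000 in
lemma reif_ball_subset {n : ℕ} {Ω : Set (EuclideanSpace ℝ (Fin n))} {δ₀ r₀ : ℝ}
    (hδ₀ : 0 < δ₀) (hδ₀' : δ₀ < 1 / 8) (hr₀ : 0 < r₀) (hΩ : IsReifenbergFlat Ω δ₀ r₀)
    {x : EuclideanSpace ℝ (Fin n)} (hx : x ∈ Ω) {ρ : ℝ} (hρ : 0 < ρ) (hρ' : ρ ≤ r₀) :
    ∃ y, ball y (3 / 14 * ρ) ⊆ ball x ρ ∩ Ω := by
  by_cases hc : ball x (3 / 14 * ρ) ⊆ Ω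
  · exact ⟨x, Set.subset_inter (ball_subset_ball (by nlinarith)) hc⟩
  · obtain ⟨z, hzb, hz⟩ := Set.not_subset.1 hc
    obtain ⟨x₀, hx₀f, hx₀d⟩ := exists_frontier_near hx hz
    have hd : dist x x₀ < 3 / 14 * ρ := lt_of_le_of_lt hx₀d (mem_ball'.1 hzb)
    set r : ℝ := 3 / 4 * ρ with hr_def
    have hr0 : 0 < r := by positivity
    have hrlt : r < (1 - δ₀) * r₀ := by nlinarith
    obtain ⟨ν, hν, hsub, hsub2⟩ := hΩ x₀ hx₀f r hr0 hrlt
    set δ : ℝ := δ₀ / (1 - δ₀) with hδ_def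
    have h1δ₀ : (0:ℝ) < 1 - δ₀ := by linarith
    have hδpos : 0 < δ := div_pos hδ₀ h1δ₀
    have hδlt : δ < 1 / 7 := by
      rw [hδ_def, div_lt_iff₀ h1δ₀]; linarith
    have hxball : x ∈ ball x₀ r := by
      rw [mem_ball]; nlinarith
    have hh := hsub2 ⟨hxball, hx⟩
    set h : ℝ := @inner ℝ _ _ ν (x - x₀) with hh_def
    have hhlb : -(δ * r) < h := hh
    have hhub : h ≤ dist x x₀ := by
      calc h ≤ |h| := le_abs_self h
        _ ≤ ‖ν‖ * ‖x - x₀‖ := abs_real_inner_le_norm ν (x - x₀)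
        _ = dist x x₀ := by rw [hν, one_mul, dist_eq_norm]
    set s : ℝ := 3 / 14 * ρ with hs_def
    set t : ℝ := s + δ * r with ht_def
    set w : EuclideanSpace ℝ (Fin n) := x - x₀ - h • ν with hw_def
    have hwν : @inner ℝ _ _ ν w = 0 := by
      rw [hw_def, inner_sub_right, real_inner_smul_right, real_inner_self_eq_norm_sq, hν]
      simp [hh_def]
    have hwnorm : ‖w‖ ≤ dist x x₀ := by
      have h1 : ‖w‖ ^ 2 = ‖x - x₀‖ ^ 2 - h ^ 2 := by
        have hkey := @norm_sub_sq_real (EuclideanSpace ℝ (Fin n)) _ _ (x - x₀) (h • ν)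
        have e1 : @inner ℝ _ _ (x - x₀) (h • ν) = h * h := by
          rw [real_inner_smul_right, real_inner_comm, ← hh_def]
        have e2 : ‖h • ν‖ ^ 2 = h ^ 2 := by
          rw [norm_smul, Real.norm_eq_abs, hν, mul_one, sq_abs]
        rw [hw_def, hkey, e1, e2]; ring
      have h2 : ‖w‖ ^ 2 ≤ dist x x₀ ^ 2 := by
        rw [h1, dist_eq_norm]; nlinarith [sq_nonneg h]
      nlinarith [norm_nonneg w, dist_nonneg (x := x) (y := x₀)]
    set y : EuclideanSpace ℝ (Fin n) := x + (t - h) • ν with hy_def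
    have hyx₀ : y - x₀ = w + t • ν := by rw [hy_def, hw_def]; module
    have hyinner : @inner ℝ _ _ ν (y - x₀) = t := by
      rw [hyx₀, inner_add_right, hwν, real_inner_smul_right, real_inner_self_eq_norm_sq, hν]
      ring
    refine ⟨y, fun y' hy' => ?_⟩
    have hy'y : ‖y' - y‖ < s := by rw [← dist_eq_norm]; exact hy'
    have hδr : δ * r < 3 / 28 * ρ := by
      have h728 : (0:ℝ) < 3 / 4 * ρ := by positivity
      calc δ * r = δ * (3 / 4 * ρ) := by rw [hr_def]
        _ < 1 / 7 * (3 / 4 * ρ) := by exact mul_lt_mul_of_pos_right hδlt h728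
        _ = 3 / 28 * ρ := by ring
    have hseq : s = 3 / 14 * ρ := hs_def
    have hteq : t = s + δ * r := ht_def
    have hreq : r = 3 / 4 * ρ := hr_def
    have hts : t - h ≥ 0 := by
      have : h ≤ s := le_trans hhub hd.le
      simp only [ht_def]; nlinarith
    constructor
    · -- y' ∈ ball x ρ
      have : dist y' x ≤ dist y' y + dist y x := dist_triangle y' y x
      have hyx : dist y x = t - h := by
        rw [dist_eq_norm, hy_def]
        simp only [add_sub_cancel_left]
        rw [norm_smul, Real.norm_eq_abs, hν, abs_of_nonneg hts, mul_one]
      rw [mem_ball]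
      have hth : t - h < t + δ * r := by linarith
      calc dist y' x ≤ dist y' y + dist y x := dist_triangle y' y x
        _ < s + (t - h) := by rw [hyx]; rw [mem_ball] at hy'; linarith
        _ < ρ := by linarith
    · -- y' ∈ Ω
      apply hsub
      constructor
      · rw [mem_ball]
        have h1 : ‖y - x₀‖ ≤ ‖w‖ + t := by
          rw [hyx₀]
          calc ‖w + t • ν‖ ≤ ‖w‖ + ‖t • ν‖ := norm_add_le _ _
            _ = ‖w‖ + t := by
                rw [norm_smul, Real.norm_eq_abs, hν, mul_one, abs_of_nonneg]
                simp only [ht_def, hs_def]; nlinarith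
        calc dist y' x₀ ≤ dist y' y + dist y x₀ := dist_triangle y' y x₀
          _ < s + (‖w‖ + t) := by
              rw [dist_eq_norm y x₀]
              rw [mem_ball] at hy'; linarith
          _ ≤ s + dist x x₀ + t := by linarith
          _ < r := by linarith
      · show δ₀ / (1 - δ₀) * r < @inner ℝ _ _ ν (y' - x₀)
        have hsplit : @inner ℝ _ _ ν (y' - x₀) = @inner ℝ _ _ ν (y' - y) + t := by
          rw [← hyinner, ← inner_add_right]
          congr 1
          abel
        have : -(‖y' - y‖) ≤ @inner ℝ _ _ ν (y' - y) := by
          have := abs_real_inner_le_norm ν (y' - y)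
          rw [hν, one_mul] at this
          cases' abs_le.1 this with h1 _
          linarith [neg_abs_le (@inner ℝ _ _ ν (y' - y))]
        rw [← hδ_def, hsplit]
        simp only [ht_def]
        linarith

lemma reif_measure_density {n : ℕ} {Ω : Set (EuclideanSpace ℝ (Fin n))} {δ₀ r₀ : ℝ}
    (hδ₀ : 0 < δ₀) (hδ₀' : δ₀ < 1 / 8) (hr₀ : 0 < r₀) (hΩ : IsReifenbergFlat Ω δ₀ r₀)
    {x : EuclideanSpace ℝ (Fin n)} (hx : x ∈ Ω) {ρ : ℝ} (hρ : 0 < ρ) (hρ' : ρ ≤ r₀) :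
    volume (ball x ρ) ≤ ENNReal.ofReal ((14 / 3 : ℝ) ^ n) * volume (ball x ρ ∩ Ω) := by
  obtain ⟨y, hy⟩ := reif_ball_subset hδ₀ hδ₀' hr₀ hΩ hx hρ hρ'
  have h1 : volume (ball y (3 / 14 * ρ)) =
      ENNReal.ofReal ((3 / 14 : ℝ) ^ n) * volume (ball (0 : EuclideanSpace ℝ (Fin n)) ρ) := by
    rw [Measure.addHaar_ball_mul_of_pos volume y (by norm_num : (0:ℝ) < 3 / 14),
      finrank_euclideanSpace_fin]
  have h2 : volume (ball x ρ) = volume (ball (0 : EuclideanSpace ℝ (Fin n)) ρ) :=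
    Measure.addHaar_ball_center volume x ρ
  calc volume (ball x ρ)
      = ENNReal.ofReal ((14 / 3 : ℝ) ^ n) *
        (ENNReal.ofReal ((3 / 14 : ℝ) ^ n) * volume (ball (0 : EuclideanSpace ℝ (Fin n)) ρ)) := by
        rw [← mul_assoc, ← ENNReal.ofReal_mul (by positivity), ← mul_pow]
        norm_num [h2]
    _ = ENNReal.ofReal ((14 / 3 : ℝ) ^ n) * volume (ball y (3 / 14 * ρ)) := by rw [h1]
    _ ≤ ENNReal.ofReal ((14 / 3 : ℝ) ^ n) * volume (ball x ρ ∩ Ω) :=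
        mul_le_mul_right (measure_mono hy) _

lemma exists_good_radius {n : ℕ} {𝒱₁ : Set (EuclideanSpace ℝ (Fin n))} {R₀ ε : ℝ}
    (hR₀ : 0 < R₀) (hε : 0 < ε) (hε' : ε < 1)
    (hsmall : volume 𝒱₁ ≤
      ENNReal.ofReal ε * volume (ball (0 : EuclideanSpace ℝ (Fin n)) R₀))
    {x : EuclideanSpace ℝ (Fin n)}
    (hT : Filter.Tendsto (fun r => volume (𝒱₁ ∩ closedBall x r) / volume (closedBall x r))
      (nhdsWithin 0 (Set.Ioi 0)) (nhds 1)) :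
    ∃ ρx : ℝ, 0 < ρx ∧ ρx ≤ R₀ ∧
      ENNReal.ofReal ε * volume (ball x ρx) ≤ volume (ball x ρx ∩ 𝒱₁) ∧
      ∀ ρ' : ℝ, ρx < ρ' →
        volume (ball x ρ' ∩ 𝒱₁) ≤ ENNReal.ofReal ε * volume (ball x ρ') := by
  have hε1 : ENNReal.ofReal ε < 1 := ENNReal.ofReal_lt_one.2 hε'
  have hev := hT.eventually_const_lt hε1
  have hev2 : Set.Ioc (0:ℝ) R₀ ∈ nhdsWithin (0:ℝ) (Set.Ioi 0) :=
    Ioc_mem_nhdsGT_of_mem ⟨le_refl _, hR₀⟩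
  obtain ⟨r0, hr0q, hr0mem⟩ := (hev.and hev2).exists
  have hr0pos : 0 < r0 := hr0mem.1
  have hVcb : ∀ ρ : ℝ, 0 < ρ →
      volume (𝒱₁ ∩ closedBall x ρ) ≤ volume (ball x ρ ∩ 𝒱₁) := by
    intro ρ h
    have hsub : 𝒱₁ ∩ closedBall x ρ ⊆ (ball x ρ ∩ 𝒱₁) ∪ sphere x ρ := by
      rintro p ⟨hp1, hp2⟩
      rcases lt_or_eq_of_le (mem_closedBall.1 hp2) with h' | h'
      · exact Or.inl ⟨mem_ball.2 h', hp1⟩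
      · exact Or.inr h'
    calc volume (𝒱₁ ∩ closedBall x ρ) ≤ volume (ball x ρ ∩ 𝒱₁) + volume (sphere x ρ) :=
          (measure_mono hsub).trans (measure_union_le _ _)
      _ = volume (ball x ρ ∩ 𝒱₁) := by
          rw [Measure.addHaar_sphere_of_ne_zero volume x h.ne', add_zero]
  have hcbball : ∀ ρ : ℝ, 0 < ρ → volume (closedBall x ρ) = volume (ball x ρ) := by
    intro ρ h
    rw [Measure.addHaar_closedBall volume x h.le, Measure.addHaar_ball_of_pos volume x h]
  have hr0S : ENNReal.ofReal ε * volume (ball x r0) ≤ volume (ball x r0 ∩ 𝒱₁) := by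
    have h1 : ENNReal.ofReal ε * volume (closedBall x r0) < volume (𝒱₁ ∩ closedBall x r0) := by
      rw [← ENNReal.lt_div_iff_mul_lt (Or.inl (measure_closedBall_pos volume x hr0pos).ne')
        (Or.inl measure_closedBall_lt_top.ne)]
      exact hr0q
    rw [← hcbball r0 hr0pos]
    exact le_trans h1.le (hVcb r0 hr0pos)
  set S : Set ℝ := {ρ : ℝ | 0 < ρ ∧ ρ ≤ R₀ ∧
    ENNReal.ofReal ε * volume (ball x ρ) ≤ volume (ball x ρ ∩ 𝒱₁)} with hS_def
  have hSne : r0 ∈ S := ⟨hr0pos, hr0mem.2, hr0S⟩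
  have hSbdd : BddAbove S := ⟨R₀, fun ρ hρ => hρ.2.1⟩
  set ρx : ℝ := sSup S with hρx_def
  have hρx0 : 0 < ρx := lt_of_lt_of_le hr0pos (le_csSup hSbdd hSne)
  have hρxR : ρx ≤ R₀ := csSup_le ⟨r0, hSne⟩ fun b hb => hb.2.1
  refine ⟨ρx, hρx0, hρxR, ?_, ?_⟩
  · obtain ⟨v, hvmono, hvlim, hvmem⟩ := exists_seq_tendsto_sSup ⟨r0, hSne⟩ hSbdd
    have hB1 : volume (ball (0 : EuclideanSpace ℝ (Fin n)) 1) ≠ ⊤ := measure_ball_lt_top.ne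
    have hle : ∀ k : ℕ, (ENNReal.ofReal ε * volume (ball (0 : EuclideanSpace ℝ (Fin n)) 1)) *
        ENNReal.ofReal (v k ^ n) ≤ volume (ball x ρx ∩ 𝒱₁) := by
      intro k
      have hv0 : 0 < v k := (hvmem k).1
      have hvρ : v k ≤ ρx := le_csSup hSbdd (hvmem k)
      calc (ENNReal.ofReal ε * volume (ball (0 : EuclideanSpace ℝ (Fin n)) 1)) *
            ENNReal.ofReal (v k ^ n)
          = ENNReal.ofReal ε * volume (ball x (v k)) := by
            rw [Measure.addHaar_ball_of_pos volume x hv0, finrank_euclideanSpace_fin]; ring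
        _ ≤ volume (ball x (v k) ∩ 𝒱₁) := (hvmem k).2.2
        _ ≤ volume (ball x ρx ∩ 𝒱₁) :=
            measure_mono (Set.inter_subset_inter_left _ (ball_subset_ball hvρ))
    have hlim2 : Filter.Tendsto
        (fun k => (ENNReal.ofReal ε * volume (ball (0 : EuclideanSpace ℝ (Fin n)) 1)) *
          ENNReal.ofReal (v k ^ n)) Filter.atTop
        (nhds ((ENNReal.ofReal ε * volume (ball (0 : EuclideanSpace ℝ (Fin n)) 1)) *
          ENNReal.ofReal (ρx ^ n))) := by
      refine ENNReal.Tendsto.const_mul (ENNReal.tendsto_ofReal (hvlim.pow n)) ?_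
      right
      exact ENNReal.mul_ne_top ENNReal.ofReal_ne_top hB1
    have hfin := le_of_tendsto hlim2 (Filter.Eventually.of_forall hle)
    calc ENNReal.ofReal ε * volume (ball x ρx)
        = (ENNReal.ofReal ε * volume (ball (0 : EuclideanSpace ℝ (Fin n)) 1)) *
          ENNReal.ofReal (ρx ^ n) := by
          rw [Measure.addHaar_ball_of_pos volume x hρx0, finrank_euclideanSpace_fin]; ring
      _ ≤ volume (ball x ρx ∩ 𝒱₁) := hfin
  · intro ρ' hρ'
    by_cases hρ'R : ρ' ≤ R₀
    · by_contra hcon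
      push_neg at hcon
      have hmem : ρ' ∈ S := ⟨lt_trans hρx0 hρ', hρ'R, hcon.le⟩
      exact absurd (le_csSup hSbdd hmem) (not_le.2 hρ')
    · push_neg at hρ'R
      calc volume (ball x ρ' ∩ 𝒱₁) ≤ volume 𝒱₁ := measure_mono Set.inter_subset_right
        _ ≤ ENNReal.ofReal ε * volume (ball (0 : EuclideanSpace ℝ (Fin n)) R₀) := hsmall
        _ ≤ ENNReal.ofReal ε * volume (ball x ρ') := by
            rw [Measure.addHaar_ball_center volume x ρ']
            exact mul_le_mul_right (measure_mono (ball_subset_ball hρ'R.le)) _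

set_option maxHeartbeats 1000000 in
/-- Reifenberg-type Vitali covering/density lemma: if `Ω` is `(δ₀, r₀)`-Reifenberg flat
with `0 < δ₀ < 1/8`, `𝒱₁, 𝒱₂ ⊆ Ω` measurable with `|𝒱₁| ≤ ε |B_{R₀}|`, and for all
`x₀ ∈ Ω`, `ρ ∈ (0, R₀]`: `B_ρ(x₀) ∩ Ω ⊄ 𝒱₂ → |B_ρ(x₀) ∩ 𝒱₁| < ε |B_ρ(x₀)|`, then
`|𝒱₁| ≤ 15ⁿ ε |𝒱₂|`. -/
theorem reifenberg_vitali_density {n : ℕ} (Ω 𝒱₁ 𝒱₂ : Set (EuclideanSpace ℝ (Fin n)))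
    (δ₀ r₀ R₀ ε : ℝ) (hδ₀ : 0 < δ₀) (hδ₀' : δ₀ < 1 / 8) (hr₀ : 0 < r₀)
    (hΩ : IsReifenbergFlat Ω δ₀ r₀)
    (h𝒱₁ : MeasurableSet 𝒱₁) (h𝒱₂ : MeasurableSet 𝒱₂)
    (h₁Ω : 𝒱₁ ⊆ Ω) (h₂Ω : 𝒱₂ ⊆ Ω)
    (hR₀ : 0 < R₀) (hR₀' : R₀ ≤ r₀) (hε : 0 < ε) (hε' : ε < 1)
    (hsmall : volume 𝒱₁ ≤
      ENNReal.ofReal ε * volume (Metric.ball (0 : EuclideanSpace ℝ (Fin n)) R₀))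
    (hcond : ∀ x₀ ∈ Ω, ∀ ρ : ℝ, 0 < ρ → ρ ≤ R₀ →
      ¬ (Metric.ball x₀ ρ ∩ Ω ⊆ 𝒱₂) →
        volume (Metric.ball x₀ ρ ∩ 𝒱₁) < ENNReal.ofReal ε * volume (Metric.ball x₀ ρ)) :
    volume 𝒱₁ ≤ (15 : ℝ≥0∞) ^ n * ENNReal.ofReal ε * volume 𝒱₂ := by
  classical
  set T : EuclideanSpace ℝ (Fin n) → Prop := fun x =>
    Filter.Tendsto (fun r => volume (𝒱₁ ∩ closedBall x r) / volume (closedBall x r))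
      (nhdsWithin 0 (Set.Ioi 0)) (nhds 1) with hT_def
  have hae := Besicovitch.ae_tendsto_measure_inter_div volume 𝒱₁
  have hbad : volume ({x | ¬ T x} ∩ 𝒱₁) = 0 := by
    rw [← Measure.restrict_apply' h𝒱₁]
    exact hae
  set D : Set (EuclideanSpace ℝ (Fin n)) := {x | x ∈ 𝒱₁ ∧ T x} with hD_def
  have hV1D : volume 𝒱₁ ≤ volume D := by
    calc volume 𝒱₁ ≤ volume (D ∪ ({x | ¬ T x} ∩ 𝒱₁)) := by
          apply measure_mono
          intro x hx
          by_cases h : T x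
          · exact Or.inl ⟨hx, h⟩
          · exact Or.inr ⟨h, hx⟩
      _ ≤ volume D + volume ({x | ¬ T x} ∩ 𝒱₁) := measure_union_le _ _
      _ = volume D := by rw [hbad, add_zero]
  have hsel : ∀ x : D, ∃ ρx : ℝ, 0 < ρx ∧ ρx ≤ R₀ ∧
      ENNReal.ofReal ε * volume (ball (x : EuclideanSpace ℝ (Fin n)) ρx) ≤
        volume (ball (x : EuclideanSpace ℝ (Fin n)) ρx ∩ 𝒱₁) ∧
      ∀ ρ' : ℝ, ρx < ρ' →
        volume (ball (x : EuclideanSpace ℝ (Fin n)) ρ' ∩ 𝒱₁) ≤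
          ENNReal.ofReal ε * volume (ball (x : EuclideanSpace ℝ (Fin n)) ρ') :=
    fun x => exists_good_radius hR₀ hε hε' hsmall x.2.2
  choose ρ hρ0 hρR hρlow hρhigh using hsel
  have hsubV2 : ∀ x : D, ball (x : EuclideanSpace ℝ (Fin n)) (ρ x) ∩ Ω ⊆ 𝒱₂ := by
    intro x
    by_contra hcon
    have hlt := hcond x.val (h₁Ω x.2.1) (ρ x) (hρ0 x) (hρR x) hcon
    exact absurd hlt (not_lt.2 (hρlow x))
  obtain ⟨u, -, hdisj, hcover⟩ :=
    Vitali.exists_disjoint_subfamily_covering_enlargement_closedBall (Set.univ : Set D)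
      Subtype.val ρ R₀ (fun a _ => hρR a) (22/7) (by norm_num)
  have hucnt : u.Countable := by
    have hdisj2 : u.PairwiseDisjoint
        (fun a : ↥D => ball (a : EuclideanSpace ℝ (Fin n)) (ρ a)) :=
      hdisj.mono fun i => ball_subset_closedBall
    exact hdisj2.countable_of_isOpen (fun i _ => isOpen_ball)
      (fun i _ => nonempty_ball.2 (hρ0 i))
  have hDcov : D ⊆ ⋃ b ∈ u, closedBall (b : EuclideanSpace ℝ (Fin n)) (22/7 * ρ b) := by
    intro x hxD
    obtain ⟨b, hbu, hb⟩ := hcover ⟨x, hxD⟩ (Set.mem_univ _)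
    exact Set.mem_biUnion hbu (hb (mem_closedBall_self (hρ0 _).le))
  have hball : ∀ b : D, volume (closedBall (b : EuclideanSpace ℝ (Fin n)) (22/7 * ρ b) ∩ 𝒱₁) ≤
      (15 : ℝ≥0∞) ^ n * ENNReal.ofReal ε *
        volume (ball (b : EuclideanSpace ℝ (Fin n)) (ρ b) ∩ 𝒱₂) := by
    intro b
    have hb0 := hρ0 b
    have hconst : ENNReal.ofReal ((45 / 14 : ℝ) ^ n) * ENNReal.ofReal ((14 / 3 : ℝ) ^ n) =
        (15 : ℝ≥0∞) ^ n := by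
      rw [← ENNReal.ofReal_mul (by positivity), ← mul_pow]
      norm_num
    calc volume (closedBall (b : EuclideanSpace ℝ (Fin n)) (22/7 * ρ b) ∩ 𝒱₁)
        ≤ volume (ball (b : EuclideanSpace ℝ (Fin n)) (45/14 * ρ b) ∩ 𝒱₁) := by
          apply measure_mono
          apply Set.inter_subset_inter_left
          apply closedBall_subset_ball
          nlinarith
      _ ≤ ENNReal.ofReal ε * volume (ball (b : EuclideanSpace ℝ (Fin n)) (45/14 * ρ b)) :=
          hρhigh b _ (by nlinarith)
      _ = ENNReal.ofReal ((45/14 : ℝ) ^ n) * ENNReal.ofReal ε *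
            volume (ball (b : EuclideanSpace ℝ (Fin n)) (ρ b)) := by
          rw [Measure.addHaar_ball_mul_of_pos volume _ (by norm_num : (0:ℝ) < 45/14),
            finrank_euclideanSpace_fin,
            ← Measure.addHaar_ball_center volume (b : EuclideanSpace ℝ (Fin n)) (ρ b)]
          ring
      _ ≤ ENNReal.ofReal ((45/14 : ℝ) ^ n) * ENNReal.ofReal ε *
            (ENNReal.ofReal ((14/3 : ℝ) ^ n) *
              volume (ball (b : EuclideanSpace ℝ (Fin n)) (ρ b) ∩ Ω)) :=
          mul_le_mul_right (reif_measure_density hδ₀ hδ₀' hr₀ hΩ (h₁Ω b.2.1) hb0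
            (le_trans (hρR b) hR₀')) _
      _ ≤ ENNReal.ofReal ((45/14 : ℝ) ^ n) * ENNReal.ofReal ε *
            (ENNReal.ofReal ((14/3 : ℝ) ^ n) *
              volume (ball (b : EuclideanSpace ℝ (Fin n)) (ρ b) ∩ 𝒱₂)) := by
          apply mul_le_mul_right
          apply mul_le_mul_right
          apply measure_mono
          intro p hp
          exact ⟨hp.1, hsubV2 b hp⟩
      _ = (15 : ℝ≥0∞) ^ n * ENNReal.ofReal ε *
            volume (ball (b : EuclideanSpace ℝ (Fin n)) (ρ b) ∩ 𝒱₂) := by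
          rw [← hconst]; ring
  have hdisj' : u.PairwiseDisjoint
      (fun b : D => ball (b : EuclideanSpace ℝ (Fin n)) (ρ b) ∩ 𝒱₂) := by
    apply hdisj.mono
    intro i
    exact Set.inter_subset_left.trans ball_subset_closedBall
  calc volume 𝒱₁ ≤ volume D := hV1D
    _ ≤ volume (⋃ b ∈ u, closedBall (b : EuclideanSpace ℝ (Fin n)) (22/7 * ρ b) ∩ 𝒱₁) := by
        apply measure_mono
        intro x hx
        rcases Set.mem_iUnion₂.1 (hDcov hx) with ⟨b, hb, hxb⟩
        exact Set.mem_iUnion₂.2 ⟨b, hb, hxb, hx.1⟩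
    _ ≤ ∑' b : u, volume (closedBall ((b : D) : EuclideanSpace ℝ (Fin n)) (22/7 * ρ b) ∩ 𝒱₁) :=
        measure_biUnion_le volume hucnt _
    _ ≤ ∑' b : u, (15 : ℝ≥0∞) ^ n * ENNReal.ofReal ε *
          volume (ball ((b : D) : EuclideanSpace ℝ (Fin n)) (ρ b) ∩ 𝒱₂) :=
        ENNReal.tsum_le_tsum (fun b => hball b)
    _ = (15 : ℝ≥0∞) ^ n * ENNReal.ofReal ε *
          ∑' b : u, volume (ball ((b : D) : EuclideanSpace ℝ (Fin n)) (ρ b) ∩ 𝒱₂) :=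
        ENNReal.tsum_mul_left
    _ = (15 : ℝ≥0∞) ^ n * ENNReal.ofReal ε *
          volume (⋃ b ∈ u, ball ((b : D) : EuclideanSpace ℝ (Fin n)) (ρ b) ∩ 𝒱₂) := by
        rw [measure_biUnion hucnt hdisj' (fun b _ => measurableSet_ball.inter h𝒱₂)]
    _ ≤ (15 : ℝ≥0∞) ^ n * ENNReal.ofReal ε * volume 𝒱₂ := by
        apply mul_le_mul_right
        apply measure_mono
        apply Set.iUnion₂_subset
        intro b _
        exact Set.inter_subset_right
end
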